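/- In the transfinite construction over a full model N: for every ordinal α, if t ∼_α τ then for all canonical terms t₀ ∈ T_τ one has t t₀ ⇝_{α+1} ⊤. -/

import Mathlib

/-! Infrastructure: the transfinite model construction over a full model of
classical higher-order logic, following Czajka, "A semantic approach to illative
combinatory logic", Section 4. -/

namespace ILM

/-- Type-free λ-terms over a set `C` of primitive constants (de Bruijn representation). -/
inductive Tm (C : Type) : Type
  | var : Nat → Tm C
  | const : C → Tm C
  | app : Tm C → Tm C → Tm C
  | lam : Tm C → Tm C

namespace Tm

variable {C : Type}

/-- Renaming of free de Bruijn variables. -/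
def rename (f : Nat → Nat) : Tm C → Tm C
  | .var n => .var (f n)
  | .const c => .const c
  | .app a b => .app (a.rename f) (b.rename f)
  | .lam a => .lam (a.rename fun n => match n with | 0 => 0 | m + 1 => f m + 1)

/-- Shift all free variables up by one. -/
def lift (t : Tm C) : Tm C := t.rename (· + 1)

/-- Simultaneous substitution. -/
def bind (σ : Nat → Tm C) : Tm C → Tm C
  | .var n => σ n
  | .const c => .const c
  | .app a b => .app (a.bind σ) (b.bind σ)
  | .lam a => .lam (a.bind fun n => match n with | 0 => .var 0 | m + 1 => (σ m).lift)

/-- Substitution of `s` for the variable `0` (β-contraction of `(λ.t) s`). -/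
def subst0 (t s : Tm C) : Tm C := t.bind fun n => match n with | 0 => s | m + 1 => .var m

end Tm

/-- Extended types `T⁺`: the constructors generate all expressions
`o | B | arr | ω | ε`; the grammar `T⁺ ::= T₁ | ω | ε`, `T₁ ::= T | T₁→T₁ | ω→T₁`
is captured by the predicate `IsT1` below. -/
inductive ETy (B : Type) : Type
  | o : ETy B
  | base : B → ETy B
  | arr : ETy B → ETy B → ETy B
  | omega : ETy B
  | eps : ETy B
deriving DecidableEq

/-- Membership in `T₁` (so `T⁺ = T₁ ∪ {ω, ε}`). -/
inductive IsT1 {B : Type} : ETy B → Prop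
  | o : IsT1 .o
  | base (b : B) : IsT1 (.base b)
  | arr {τ1 τ2 : ETy B} : IsT1 τ1 → IsT1 τ2 → IsT1 (.arr τ1 τ2)
  | omegaArr {τ2 : ETy B} : IsT1 τ2 → IsT1 (.arr .omega τ2)

/-- Membership in `T⁺`. -/
def IsTp {B : Type} (τ : ETy B) : Prop := IsT1 τ ∨ τ = .omega ∨ τ = .eps

/-- The normalized arrow `τ₁ → τ₂`, implementing the notational conventions
`τ→ε = ε` (for `τ ≠ ε`), `ε→τ = ω` and `τ→ω = ω`. -/
def arrN {B : Type} : ETy B → ETy B → ETy B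
  | _, .omega => .omega
  | .eps, _ => .omega
  | _, .eps => .eps
  | τ1, τ2 => .arr τ1 τ2

/-- The rank of a type. -/
def rank {B : Type} : ETy B → Nat
  | .arr τ1 τ2 => max (rank τ1 + 1) (rank τ2)
  | _ => 1

/-- A canonical system over domains `D` for the base types: the primitive
constants `Σ⁺ = {Ξ, L} ∪ {A_τ : τ ∈ B} ∪ ⋃_τ Σ_τ`, the sets `T_τ` of canonical
terms of each type, the distinguished canonical constants `⊤, ⊥` of type `o`,
and the function `F` associating to each canonical term of a function type its
set-theoretic function, as constructed in the paper from a full model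
`N = ⟨{D_τ}, I⟩` of classical higher-order logic.  The fields axiomatize the
construction: the sets of canonical terms of distinct types are disjoint sets of
closed normal terms (`T_ω` is the set of all terms, `T_ε = ∅`), for `τ₁ ≠ ω`
the canonical terms of type `τ₁→τ₂` are constants corresponding bijectively
(via `F`) to *all* set-theoretic functions from `T_{τ₁}` to `T_{τ₂}` (this is
where fullness of `N` enters), the canonical terms of type `ω→τ₂` are the terms
`λx.ρ` with `ρ ∈ T_{τ₂}` (with `F` giving constant functions), the canonical
terms of base type `b` correspond bijectively to the domain `D b`, and those
of type `o` are exactly `⊤` and `⊥`. -/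
structure CanSys (B : Type) (D : B → Type) where
  /-- the primitive constants `Σ⁺` -/
  C : Type
  cXi : C
  cL : C
  cA : B → C
  /-- the sets `T_τ` of canonical terms -/
  TT : ETy B → Set (Tm C)
  /-- the canonical constant `⊤ ∈ Σ_o` -/
  top : Tm C
  /-- the canonical constant `⊥ ∈ Σ_o` -/
  bot : Tm C
  /-- `F τ₁ τ₂ ρ t` : the value at `t ∈ T_{τ₁}` of the function associated with
  the canonical term `ρ ∈ T_{τ₁→τ₂}` -/
  F : ETy B → ETy B → Tm C → Tm C → Tm C
  hXiL : cXi ≠ cL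
  hXiA : ∀ b, cXi ≠ cA b
  hLA : ∀ b, cL ≠ cA b
  hAinj : Function.Injective cA
  TT_omega : TT .omega = Set.univ
  TT_eps : TT .eps = ∅
  TT_invalid : ∀ τ : ETy B, ¬ IsT1 τ → τ ≠ .omega → TT τ = ∅
  TT_o : TT .o = {top, bot}
  top_ne_bot : top ≠ bot
  TT_const : ∀ τ : ETy B, IsT1 τ → (∀ τ2, τ ≠ .arr .omega τ2) →
    ∀ t ∈ TT τ, ∃ c : C, t = .const c
  TT_base_equiv : ∀ b : B, Nonempty (D b ≃ TT (.base b))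
  TT_omega_arr : ∀ τ2 : ETy B, IsT1 τ2 → TT (.arr .omega τ2) = Tm.lam '' TT τ2
  F_omega : ∀ τ2 : ETy B, ∀ ρ ∈ TT τ2, ∀ t : Tm C, F .omega τ2 (.lam ρ) t = ρ
  F_mapsto : ∀ τ1 τ2 : ETy B, IsT1 (.arr τ1 τ2) →
    ∀ ρ ∈ TT (.arr τ1 τ2), ∀ t ∈ TT τ1, F τ1 τ2 ρ t ∈ TT τ2
  F_full : ∀ τ1 τ2 : ETy B, IsT1 (.arr τ1 τ2) → τ1 ≠ .omega →
    ∀ g : Tm C → Tm C, (∀ t ∈ TT τ1, g t ∈ TT τ2) →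
      ∃ ρ ∈ TT (.arr τ1 τ2), ∀ t ∈ TT τ1, F τ1 τ2 ρ t = g t
  F_inj : ∀ τ1 τ2 : ETy B, IsT1 (.arr τ1 τ2) → τ1 ≠ .omega →
    ∀ ρ ∈ TT (.arr τ1 τ2), ∀ ρ' ∈ TT (.arr τ1 τ2),
      (∀ t ∈ TT τ1, F τ1 τ2 ρ t = F τ1 τ2 ρ' t) → ρ = ρ'
  TT_disj : ∀ τ τ' : ETy B, τ ≠ τ' → τ ≠ .omega → τ' ≠ .omega →
    Disjoint (TT τ) (TT τ')
  prim_notin : ∀ τ : ETy B, τ ≠ .omega →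
    Tm.const cXi ∉ TT τ ∧ Tm.const cL ∉ TT τ ∧ ∀ b, Tm.const (cA b) ∉ TT τ
  cover : ∀ c : C, c = cXi ∨ c = cL ∨ (∃ b, c = cA b) ∨
    ∃ τ : ETy B, τ ≠ .omega ∧ Tm.const c ∈ TT τ

namespace CanSys

variable {B : Type} {D : B → Type} (S : CanSys B D)

/-- The term `Ξ`. -/
def XiT : Tm S.C := .const S.cXi

/-- The term `L`. -/
def LT : Tm S.C := .const S.cL

/-- The term `A_b`. -/
def AT (b : B) : Tm S.C := .const (S.cA b)

/-- `K t = λx.t` with `x ∉ FV(t)`. -/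
def Kt (t : Tm S.C) : Tm S.C := .lam t.lift

/-- `H t = L (K t)`. -/
def Ht (t : Tm S.C) : Tm S.C := .app S.LT (S.Kt t)

/-- The term `H = λx. L (K x)`. -/
def Hterm : Tm S.C := .lam (.app S.LT (.lam (.var 1)))

/-- `F t₁ t₂`, written out according to the notational convention:
`λf. Ξ t₁ (λx. t₂ (f x))` if `t₂` is not a λ-abstraction, and
`λf. Ξ t₁ (λx. q₂[z/(f x)])` if `t₂ = λz. q₂`. -/
def Ft (t1 t2 : Tm S.C) : Tm S.C :=
  .lam (.app (.app S.XiT t1.lift)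
    (match t2 with
     | .lam b => .lam (b.bind fun n => match n with
         | 0 => .app (.var 1) (.var 0)
         | m + 1 => .var (m + 2))
     | t2 => .lam (.app t2.lift.lift (.app (.var 1) (.var 0)))))

end CanSys


mutual
  /-- One-step reduction `→_{≤α}` of the reduction system `R_α`: the context
  closure of β- and η-reduction together with the rules `c t → F(c)(ρ₁)` for
  canonical constants `c ∈ Σ_{τ₁→τ₂}` (`τ₁ ≠ ω`) and `t ≻_{<α} ρ₁`. -/
  inductive Step {B : Type} {D : B → Type} (S : CanSys B D) :
      Ordinal.{0} → Tm S.C → Tm S.C → Prop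
    | beta (α : Ordinal.{0}) (t s : Tm S.C) : Step S α (.app (.lam t) s) (t.subst0 s)
    | eta (α : Ordinal.{0}) (t : Tm S.C) : Step S α (.lam (.app t.lift (.var 0))) t
    | crule {α γ : Ordinal.{0}} (hγ : γ < α) {τ1 τ2 : ETy B} (h1 : τ1 ≠ .omega)
        {c : Tm S.C} (hc : c ∈ S.TT (.arr τ1 τ2)) {ρ1 : Tm S.C} (hρ1 : ρ1 ∈ S.TT τ1)
        {t : Tm S.C} (hs : Succ S γ t ρ1) :
        Step S α (.app c t) (S.F τ1 τ2 c ρ1)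
    | appL {α : Ordinal.{0}} {t t' : Tm S.C} (s : Tm S.C) :
        Step S α t t' → Step S α (.app t s) (.app t' s)
    | appR (t : Tm S.C) {α : Ordinal.{0}} {s s' : Tm S.C} :
        Step S α s s' → Step S α (.app t s) (.app t s')
    | lam {α : Ordinal.{0}} {t t' : Tm S.C} :
        Step S α t t' → Step S α (.lam t) (.lam t')

  /-- Many-step reduction `↠_{≤α}` (the reflexive-transitive closure of `→_{≤α}`). -/
  inductive Steps {B : Type} {D : B → Type} (S : CanSys B D) :
      Ordinal.{0} → Tm S.C → Tm S.C → Prop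
    | refl (α : Ordinal.{0}) (t : Tm S.C) : Steps S α t t
    | tail {α : Ordinal.{0}} {t u v : Tm S.C} :
        Steps S α t u → Step S α u v → Steps S α t v

  /-- `t ⇝_α ρ` : `t ↠_{≤α} t' ≻_α ρ` for some `t'`. -/
  inductive Lead {B : Type} {D : B → Type} (S : CanSys B D) :
      Ordinal.{0} → Tm S.C → Tm S.C → Prop
    | mk {α : Ordinal.{0}} {t t' ρ : Tm S.C} :
        Steps S α t t' → Succ S α t' ρ → Lead S α t ρ

  /-- `t ⇝_{<α} ρ` : `t ⇝_γ ρ` for some `γ < α`. -/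
  inductive LeadLt {B : Type} {D : B → Type} (S : CanSys B D) :
      Ordinal.{0} → Tm S.C → Tm S.C → Prop
    | mk {α γ : Ordinal.{0}} {t ρ : Tm S.C} :
        γ < α → Lead S γ t ρ → LeadLt S α t ρ

  /-- The typing relation `t ∼_α τ` (Definition 4.4), by the rules
  (A), (H), (Kω), (Kε), (F) and (Fω). -/
  inductive Sim {B : Type} {D : B → Type} (S : CanSys B D) :
      Ordinal.{0} → Tm S.C → ETy B → Prop
    | ofA (α : Ordinal.{0}) (b : B) : Sim S α (S.AT b) (.base b)
    | ofH (α : Ordinal.{0}) : Sim S α S.Hterm .o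
    | ofKom {α : Ordinal.{0}} {t : Tm S.C} :
        LeadLt S α t S.top → Sim S α (S.Kt t) .omega
    | ofKeps {α : Ordinal.{0}} {t : Tm S.C} :
        LeadLt S α t S.bot → Sim S α (S.Kt t) .eps
    | ofF {α γ1 γ2 : Ordinal.{0}} (h1 : γ1 < α) (h2 : γ2 < α)
        {t1 t2 : Tm S.C} {τ1 τ2 : ETy B} :
        Sim S γ1 t1 τ1 → Sim S γ2 t2 τ2 → Sim S α (S.Ft t1 t2) (arrN τ1 τ2)
    | ofFom {α γ : Ordinal.{0}} (hγ : γ < α) {t1 t2 : Tm S.C} :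
        Sim S γ t1 .eps → Sim S α (S.Ft t1 t2) .omega

  /-- The relation `t ≻_α ρ` between terms and canonical terms (Definition 4.5). -/
  inductive Succ {B : Type} {D : B → Type} (S : CanSys B D) :
      Ordinal.{0} → Tm S.C → Tm S.C → Prop
    /- `ρ ≻_α ρ` for canonical `ρ` -/
    | refl {τ : ETy B} (hτ : τ ≠ .omega) {ρ : Tm S.C} (hρ : ρ ∈ S.TT τ)
        (α : Ordinal.{0}) : Succ S α ρ ρ
    /- `t ≻_α ρ` when `ρ` has canonical type `τ₁→τ₂` (possibly `τ₁ = ω`) and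
       `t t₁ ⇝_{<α} F(ρ)(t₁)` for all `t₁ ∈ T_{τ₁}` -/
    | fn {τ1 τ2 : ETy B} {ρ : Tm S.C} (hρ : ρ ∈ S.TT (.arr τ1 τ2))
        {α : Ordinal.{0}} {t : Tm S.C}
        (h : ∀ t1 ∈ S.TT τ1, LeadLt S α (.app t t1) (S.F τ1 τ2 ρ t1)) :
        Succ S α t ρ
    /- base postulates for `t ≻_α ⊤` -/
    | topLA (α : Ordinal.{0}) (b : B) : Succ S α (.app S.LT (S.AT b)) S.top
    | topLH (α : Ordinal.{0}) : Succ S α (.app S.LT S.Hterm) S.top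
    | topA {b : B} {c : Tm S.C} (hc : c ∈ S.TT (.base b)) (α : Ordinal.{0}) :
        Succ S α (.app (S.AT b) c) S.top
    | topH {c : Tm S.C} (hc : c = S.top ∨ c = S.bot) (α : Ordinal.{0}) :
        Succ S α (S.Ht c) S.top
    /- `(Ξ_i^⊤)` -/
    | xiTop {α : Ordinal.{0}} (hα : 0 < α) {t1 t2 : Tm S.C} {τ : ETy B}
        (h1 : Sim S α t1 τ) (h2 : ∀ t3 ∈ S.TT τ, LeadLt S α (.app t2 t3) S.top) :
        Succ S α (.app (.app S.XiT t1) t2) S.top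
    /- `(Ξ_H^⊤)` -/
    | xiHTop {α : Ordinal.{0}} (hα : 0 < α) {t1 t2 : Tm S.C} {τ : ETy B}
        (h1 : Sim S α t1 τ)
        (h2 : ∀ t3 ∈ S.TT τ, LeadLt S α (S.Ht (.app t2 t3)) S.top) :
        Succ S α (S.Ht (.app (.app S.XiT t1) t2)) S.top
    /- `(F_L^⊤)`, first case: `t₁ ∼_α ε` -/
    | flTopEps {α : Ordinal.{0}} (hα : 0 < α) {t1 t2 : Tm S.C}
        (h1 : Sim S α t1 .eps) :
        Succ S α (.app S.LT (S.Ft t1 t2)) S.top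
    /- `(F_L^⊤)`, second case: `t₁ ∼_α τ` for some `τ ≠ ε` and `L t₂ ⇝_{<α} ⊤` -/
    | flTop {α : Ordinal.{0}} (hα : 0 < α) {t1 t2 : Tm S.C} {τ : ETy B}
        (hτ : τ ≠ .eps) (h1 : Sim S α t1 τ) (h2 : LeadLt S α (.app S.LT t2) S.top) :
        Succ S α (.app S.LT (S.Ft t1 t2)) S.top
    /- `(H_i^⊤)` -/
    | hiTop {α : Ordinal.{0}} (hα : 0 < α) {t1 : Tm S.C} (h : LeadLt S α t1 S.top) :
        Succ S α (S.Ht t1) S.top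
    /- `(Ξ^⊥)` -/
    | xiBot {α : Ordinal.{0}} (hα : 0 < α) {t1 t2 : Tm S.C} {τ : ETy B}
        {γ : Ordinal.{0}} (hγ : γ < α)
        (hH : Succ S γ (S.Ht (.app (.app S.XiT t1) t2)) S.top)
        (h1 : Sim S α t1 τ) {t3 : Tm S.C} (h3 : t3 ∈ S.TT τ)
        (hb : LeadLt S α (.app t2 t3) S.bot) :
        Succ S α (.app (.app S.XiT t1) t2) S.bot
end


variable {B : Type} {D : B → Type}

/-- `t ≻ ρ` : the stable relation `≻_ζ` at the closure ordinal (by monotonicity,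
it equals the union of the `≻_α` over all ordinals `α`). -/
def SuccS (S : CanSys B D) (t ρ : Tm S.C) : Prop := ∃ α : Ordinal.{0}, Succ S α t ρ

/-- `t ∼ τ` : the stable typing relation. -/
def SimS (S : CanSys B D) (t : Tm S.C) (τ : ETy B) : Prop := ∃ α : Ordinal.{0}, Sim S α t τ

/-- One-step reduction of the stable reduction system `R`. -/
def StepR (S : CanSys B D) (t t' : Tm S.C) : Prop := ∃ α : Ordinal.{0}, Step S α t t'

/-- `t ↠_R t'` : many-step reduction in the stable reduction system `R`. -/
def StepsR (S : CanSys B D) : Tm S.C → Tm S.C → Prop := Relation.ReflTransGen (StepR S)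

/-- `t ⇝ ρ` : the stable relation `⇝_ζ`. -/
def LeadR (S : CanSys B D) (t ρ : Tm S.C) : Prop :=
  ∃ t', StepsR S t t' ∧ SuccS S t' ρ

/-- `t =_{≤α} t'` : convertibility in `R_α`. -/
def ConvLe (S : CanSys B D) (α : Ordinal.{0}) : Tm S.C → Tm S.C → Prop :=
  Relation.EqvGen (Step S α)

/-- `t =_R t'` : convertibility in the stable reduction system `R`. -/
def ConvR (S : CanSys B D) : Tm S.C → Tm S.C → Prop :=
  Relation.EqvGen (StepR S)

/-- Filling the boxes `□₁, …, □ₖ` of a `k`-ary context (a λ-term over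
`Σ⁺ ∪ {□₁, …, □ₖ}`) with terms, in such a way that the free variables of the
inserted terms do not become bound. -/
def fillk {C : Type} {k : Nat} (ts : Fin k → Tm C) : Tm (Fin k ⊕ C) → Tm C
  | .var n => .var n
  | .const (.inl i) => ts i
  | .const (.inr c) => .const c
  | .app a b => .app (fillk ts a) (fillk ts b)
  | .lam a => .lam (fillk (fun i => (ts i).lift) a)

/-- Filling a unary context. -/
def fill1 {C : Type} (Ctx : Tm (Fin 1 ⊕ C)) (t : Tm C) : Tm C :=
  fillk (fun _ => t) Ctx

/-- `t ≫^n t'` (at the stable level): there are a `k`-ary context `Cx`, terms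
`t₁, …, t_k` and canonical terms `ρ₁, …, ρ_k` of ranks `≤ n` with `tᵢ ≻ ρᵢ`,
`t = Cx[t₁,…,t_k]` and `t' = Cx[ρ₁,…,ρ_k]`. -/
def Gg (S : CanSys B D) (n : Nat) (t t' : Tm S.C) : Prop :=
  ∃ (k : Nat) (Cx : Tm (Fin k ⊕ S.C)) (ts ρs : Fin k → Tm S.C),
    (∀ i, SuccS S (ts i) (ρs i)) ∧
    (∀ i, ∃ τ : ETy B, τ ≠ .omega ∧ ρs i ∈ S.TT τ ∧ rank τ ≤ n) ∧
    t = fillk ts Cx ∧ t' = fillk ρs Cx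



namespace Tm
variable {C : Type}

/-- `up σ` is the substitution used under a binder. -/
def up (σ : Nat → Tm C) : Nat → Tm C :=
  fun n => match n with | 0 => .var 0 | m + 1 => (σ m).lift

/-- the substitution of `subst0`. -/
def s0 (s : Tm C) : Nat → Tm C :=
  fun n => match n with | 0 => s | m + 1 => .var m

theorem bind_lam' (σ : Nat → Tm C) (a : Tm C) :
    (Tm.lam a).bind σ = .lam (a.bind (up σ)) := rfl

theorem subst0_def (t s : Tm C) : t.subst0 s = t.bind (s0 s) := rfl

theorem rename_congr {f g : Nat → Nat} (h : ∀ n, f n = g n) (t : Tm C) :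
    t.rename f = t.rename g := by rw [show f = g from funext h]

theorem bind_congr {σ σ' : Nat → Tm C} (h : ∀ n, σ n = σ' n) (t : Tm C) :
    t.bind σ = t.bind σ' := by rw [show σ = σ' from funext h]

theorem rename_rename (t : Tm C) : ∀ f g : Nat → Nat,
    (t.rename f).rename g = t.rename (fun n => g (f n)) := by
  induction t with
  | var n => intros; rfl
  | const c => intros; rfl
  | app a b iha ihb => intro f g; simp only [rename]; rw [iha, ihb]
  | lam a ih =>
      intro f g; simp only [rename]; rw [ih]
      exact congrArg Tm.lam (rename_congr (fun n => by cases n <;> rfl) a)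

theorem rename_bind (t : Tm C) : ∀ (f : Nat → Nat) (σ : Nat → Tm C),
    (t.rename f).bind σ = t.bind (fun n => σ (f n)) := by
  induction t with
  | var n => intros; rfl
  | const c => intros; rfl
  | app a b iha ihb => intro f σ; simp only [rename, bind]; rw [iha, ihb]
  | lam a ih =>
      intro f σ; simp only [rename, bind]; rw [ih]
      exact congrArg Tm.lam (bind_congr (fun n => by cases n <;> rfl) a)

theorem bind_rename (t : Tm C) : ∀ (σ : Nat → Tm C) (f : Nat → Nat),
    (t.bind σ).rename f = t.bind (fun n => (σ n).rename f) := by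
  induction t with
  | var n => intros; rfl
  | const c => intros; rfl
  | app a b iha ihb => intro σ f; simp only [rename, bind]; rw [iha, ihb]
  | lam a ih =>
      intro σ f; simp only [rename, bind]; rw [ih]
      refine congrArg Tm.lam (bind_congr (fun n => ?_) a)
      cases n with
      | zero => rfl
      | succ m => show ((σ m).lift).rename _ = ((σ m).rename f).lift
                  simp only [lift, rename_rename]

theorem bind_bind (t : Tm C) : ∀ σ σ' : Nat → Tm C,
    (t.bind σ).bind σ' = t.bind (fun n => (σ n).bind σ') := by
  induction t with
  | var n => intros; rfl
  | const c => intros; rfl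
  | app a b iha ihb => intro σ σ'; simp only [bind]; rw [iha, ihb]
  | lam a ih =>
      intro σ σ'; simp only [bind]; rw [ih]
      refine congrArg Tm.lam (bind_congr (fun n => ?_) a)
      cases n with
      | zero => rfl
      | succ m => show ((σ m).lift).bind _ = ((σ m).bind σ').lift
                  rw [lift, rename_bind, lift, bind_rename]
                  rfl

theorem bind_var (t : Tm C) : t.bind (fun n => .var n) = t := by
  induction t with
  | var n => rfl
  | const c => rfl
  | app a b iha ihb => simp only [bind]; rw [iha, ihb]
  | lam a ih =>
      simp only [bind]
      rw [show (fun n => match n with | 0 => (.var 0 : Tm C) | m + 1 => (Tm.var m).lift)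
            = fun n => (.var n : Tm C) from funext fun n => by cases n <;> rfl, ih]

theorem rename_eq_bind (t : Tm C) : ∀ f : Nat → Nat,
    t.rename f = t.bind (fun n => .var (f n)) := by
  induction t with
  | var n => intros; rfl
  | const c => intros; rfl
  | app a b iha ihb => intro f; simp only [rename, bind]; rw [iha, ihb]
  | lam a ih =>
      intro f; simp only [rename, bind]; rw [ih]
      exact congrArg Tm.lam (bind_congr (fun n => by cases n <;> rfl) a)

theorem rename_id (t : Tm C) : t.rename (fun n => n) = t := by
  rw [rename_eq_bind]; exact bind_var t

theorem lift_bind (t : Tm C) (σ : Nat → Tm C) :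
    t.lift.bind σ = t.bind (fun n => σ (n + 1)) := by
  simp only [lift, rename_bind]

theorem subst0_lift (t s : Tm C) : t.lift.subst0 s = t := by
  rw [subst0_def, lift_bind]
  exact bind_var t

theorem lift_bind_up (t : Tm C) (σ : Nat → Tm C) :
    t.lift.bind (up σ) = (t.bind σ).lift := by
  rw [lift_bind, lift, bind_rename]; rfl

end Tm
section Reduction
variable {B : Type} {D : B → Type} {S : CanSys B D}

theorem steps_rtg {α : Ordinal.{0}} {t u : Tm S.C} (h : Steps S α t u) :
    Relation.ReflTransGen (Step S α) t u := by
  refine Steps.rec (motive_1 := fun _ _ _ _ => True)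
    (motive_2 := fun α t u _ => Relation.ReflTransGen (Step S α) t u)
    (motive_3 := fun _ _ _ _ => True) (motive_4 := fun _ _ _ _ => True)
    (motive_5 := fun _ _ _ _ => True) (motive_6 := fun _ _ _ _ => True)
    ?_ ?_ ?_ ?_ ?_ ?_ ?_ ?_ ?_ ?_ ?_ ?_ ?_ ?_ ?_ ?_ ?_ ?_ ?_ ?_ ?_ ?_ ?_ ?_ ?_ ?_ ?_ ?_ h
  all_goals intros
  all_goals first
    | trivial
    | exact Relation.ReflTransGen.refl
    | exact Relation.ReflTransGen.tail (by assumption) (by assumption)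

theorem rtg_steps {α : Ordinal.{0}} {t u : Tm S.C}
    (h : Relation.ReflTransGen (Step S α) t u) : Steps S α t u := by
  induction h with
  | refl => exact .refl _ _
  | tail _ h2 ih => exact ih.tail h2

theorem steps_trans {α : Ordinal.{0}} {t u v : Tm S.C}
    (h1 : Steps S α t u) (h2 : Steps S α u v) : Steps S α t v :=
  rtg_steps ((steps_rtg h1).trans (steps_rtg h2))

theorem steps_one {α : Ordinal.{0}} {t u : Tm S.C} (h : Step S α t u) :
    Steps S α t u := (Steps.refl α t).tail h

theorem step_mono : ∀ (t : Tm S.C) {t' : Tm S.C} {α α' : Ordinal.{0}},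
    α ≤ α' → Step S α t t' → Step S α' t t' := by
  intro t
  induction t with
  | var n => intro _ _ _ _ h; cases h
  | const c => intro _ _ _ _ h; cases h
  | app a b iha ihb =>
      intro t' α α' hle h
      cases h with
      | beta => exact .beta _ _ _
      | crule hγ h1 hc hρ1 hs => exact .crule (lt_of_lt_of_le hγ hle) h1 hc hρ1 hs
      | appL t2 hs => exact .appL b (iha hle hs)
      | appR s2 hs => exact .appR a (ihb hle hs)
  | lam a ih =>
      intro t' α α' hle h
      cases h with
      | eta => exact .eta _ _
      | lam hs => exact .lam (ih hle hs)

theorem steps_mono {α α' : Ordinal.{0}} (hle : α ≤ α') {t u : Tm S.C}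
    (h : Steps S α t u) : Steps S α' t u :=
  rtg_steps (Relation.ReflTransGen.mono (fun _ _ hs => step_mono _ hle hs) _ _ (steps_rtg h))

theorem steps_appL {α : Ordinal.{0}} (s : Tm S.C) {t t' : Tm S.C}
    (h : Steps S α t t') : Steps S α (.app t s) (.app t' s) :=
  rtg_steps (Relation.ReflTransGen.lift (fun x => Tm.app x s)
    (fun _ _ hs => Step.appL s hs) _ _ (steps_rtg h))

theorem steps_appR {α : Ordinal.{0}} (t : Tm S.C) {s s' : Tm S.C}
    (h : Steps S α s s') : Steps S α (.app t s) (.app t s') :=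
  rtg_steps (Relation.ReflTransGen.lift (fun x => Tm.app t x)
    (fun _ _ hs => Step.appR t hs) _ _ (steps_rtg h))

theorem steps_lam {α : Ordinal.{0}} {t t' : Tm S.C}
    (h : Steps S α t t') : Steps S α (.lam t) (.lam t') :=
  rtg_steps (Relation.ReflTransGen.lift Tm.lam
    (fun _ _ hs => Step.lam hs) _ _ (steps_rtg h))

theorem leadLt_mono {α α' : Ordinal.{0}} (hle : α ≤ α') {t ρ : Tm S.C}
    (h : LeadLt S α t ρ) : LeadLt S α' t ρ := by
  cases h with | mk hγ hl => exact .mk (lt_of_lt_of_le hγ hle) hl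

theorem sim_mono {α α' : Ordinal.{0}} (hle : α ≤ α') {t : Tm S.C} {τ : ETy B}
    (h : Sim S α t τ) : Sim S α' t τ := by
  cases h with
  | ofA => exact .ofA _ _
  | ofH => exact .ofH _
  | ofKom h => exact .ofKom (leadLt_mono hle h)
  | ofKeps h => exact .ofKeps (leadLt_mono hle h)
  | ofF h1 h2 s1 s2 =>
      exact .ofF (lt_of_lt_of_le h1 hle) (lt_of_lt_of_le h2 hle) s1 s2
  | ofFom hγ s => exact .ofFom (lt_of_lt_of_le hγ hle) s

theorem succ_mono {α α' : Ordinal.{0}} (hle : α ≤ α') {t ρ : Tm S.C}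
    (h : Succ S α t ρ) : Succ S α' t ρ := by
  cases h with
  | refl hτ hρ => exact .refl hτ hρ _
  | fn hρ h => exact .fn hρ (fun t1 h1 => leadLt_mono hle (h t1 h1))
  | topLA => exact .topLA _ _
  | topLH => exact .topLH _
  | topA hc => exact .topA hc _
  | topH hc => exact .topH hc _
  | xiTop hα h1 h2 =>
      exact .xiTop (lt_of_lt_of_le hα hle) (sim_mono hle h1)
        (fun t3 h3 => leadLt_mono hle (h2 t3 h3))
  | xiHTop hα h1 h2 =>
      exact .xiHTop (lt_of_lt_of_le hα hle) (sim_mono hle h1)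
        (fun t3 h3 => leadLt_mono hle (h2 t3 h3))
  | flTopEps hα h1 => exact .flTopEps (lt_of_lt_of_le hα hle) (sim_mono hle h1)
  | flTop hα hτ h1 h2 =>
      exact .flTop (lt_of_lt_of_le hα hle) hτ (sim_mono hle h1) (leadLt_mono hle h2)
  | hiTop hα h => exact .hiTop (lt_of_lt_of_le hα hle) (leadLt_mono hle h)
  | xiBot hα hγ hH h1 h3 hb =>
      exact .xiBot (lt_of_lt_of_le hα hle) (lt_of_lt_of_le hγ hle) hH
        (sim_mono hle h1) h3 (leadLt_mono hle hb)

theorem lead_mono {α α' : Ordinal.{0}} (hle : α ≤ α') {t ρ : Tm S.C}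
    (h : Lead S α t ρ) : Lead S α' t ρ := by
  cases h with | mk st su => exact .mk (steps_mono hle st) (succ_mono hle su)

theorem steps_lead {α : Ordinal.{0}} {t u ρ : Tm S.C}
    (h1 : Steps S α t u) (h2 : Lead S α u ρ) : Lead S α t ρ := by
  cases h2 with | mk st su => exact .mk (steps_trans h1 st) su

end Reduction
section Closed
variable {B : Type} {D : B → Type} {S : CanSys B D}

theorem IsT1.ne_omega {τ : ETy B} (h : IsT1 τ) : τ ≠ .omega := by
  intro e; subst e; nomatch h

theorem closed_T1 {S : CanSys B D} : ∀ {τ : ETy B}, IsT1 τ →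
    ∀ ρ ∈ S.TT τ, ∀ σ : Nat → Tm S.C, ρ.bind σ = ρ := by
  intro τ hτ
  induction hτ with
  | o =>
      intro ρ hρ σ
      obtain ⟨c, rfl⟩ := S.TT_const .o .o (fun _ h => nomatch h) ρ hρ
      rfl
  | base b =>
      intro ρ hρ σ
      obtain ⟨c, rfl⟩ := S.TT_const _ (.base b) (fun _ h => nomatch h) ρ hρ
      rfl
  | arr h1 h2 ih1 ih2 =>
      intro ρ hρ σ
      obtain ⟨c, rfl⟩ := S.TT_const _ (.arr h1 h2)
        (fun τ2' he => absurd (ETy.arr.inj he).1 h1.ne_omega) ρ hρ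
      rfl
  | @omegaArr τ2 h2 ih2 =>
      intro ρ hρ σ
      rw [S.TT_omega_arr _ h2] at hρ
      obtain ⟨ρ', hρ', rfl⟩ := hρ
      rw [Tm.bind_lam']
      rw [ih2 ρ' hρ' _]

theorem closed_rename {t : Tm S.C} (h : ∀ σ : Nat → Tm S.C, t.bind σ = t)
    (f : Nat → Nat) : t.rename f = t := by
  rw [Tm.rename_eq_bind]; exact h _

end Closed

section ArrN
variable {B : Type}

theorem arrN_eps_left (τ2 : ETy B) : arrN .eps τ2 = .omega := by
  cases τ2 <;> rfl

theorem arrN_omega_right (τ1 : ETy B) : arrN τ1 .omega = .omega := by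
  cases τ1 <;> rfl

theorem arrN_eps_right {τ1 : ETy B} (h : τ1 ≠ .eps) : arrN τ1 .eps = .eps := by
  cases τ1 <;> first | rfl | exact absurd rfl h

theorem arrN_std {τ1 τ2 : ETy B} (h1 : τ1 ≠ .eps) (h2 : τ2 ≠ .omega)
    (h3 : τ2 ≠ .eps) : arrN τ1 τ2 = .arr τ1 τ2 := by
  cases τ1 <;> cases τ2 <;>
    first | rfl | exact absurd rfl h1 | exact absurd rfl h2 | exact absurd rfl h3

end ArrN

/-- `appRed t u`: `t u` if `t` is not an abstraction, and the β-reduct of `t u`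
if it is. -/
def appRed {C : Type} (t u : Tm C) : Tm C :=
  match t with
  | .lam q => q.subst0 u
  | t => .app t u

/-- The second argument of the `Ξ`-term obtained by β-reducing `(F t₁ t₂) t₀`. -/
def Mred {B : Type} {D : B → Type} (S : CanSys B D) (t2 t0 : Tm S.C) : Tm S.C :=
  match t2 with
  | .lam q => .lam (q.bind fun n =>
      match n with | 0 => .app t0.lift (.var 0) | m + 1 => .var (m + 1))
  | t2 => .lam (.app t2.lift (.app t0.lift (.var 0)))

section FtRed
variable {B : Type} {D : B → Type} {S : CanSys B D}

theorem Ft_subst0 (t1 t2 t0 : Tm S.C) :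
    appRed (S.Ft t1 t2) t0 = .app (.app S.XiT t1) (Mred S t2 t0) := by
  cases t2 with
  | lam q =>
      show Tm.app (.app S.XiT (t1.lift.bind (Tm.s0 t0))) (.lam ((q.bind _).bind _)) = _
      rw [show t1.lift.bind (Tm.s0 t0) = t1 from Tm.subst0_lift t1 t0, Tm.bind_bind]
      refine congrArg (fun z => Tm.app (.app S.XiT t1) (Tm.lam z)) ?_
      refine Tm.bind_congr (fun n => ?_) q
      cases n with
      | zero => rfl
      | succ m => rfl
  | var k =>
      show Tm.app (.app S.XiT (t1.lift.bind (Tm.s0 t0)))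
        (.lam (.app ((Tm.var k).lift.lift.bind _) _)) = _
      rw [show t1.lift.bind (Tm.s0 t0) = t1 from Tm.subst0_lift t1 t0]
      rfl
  | const c =>
      show Tm.app (.app S.XiT (t1.lift.bind (Tm.s0 t0))) _ = _
      rw [show t1.lift.bind (Tm.s0 t0) = t1 from Tm.subst0_lift t1 t0]
      rfl
  | app a b =>
      show Tm.app (.app S.XiT (t1.lift.bind (Tm.s0 t0)))
        (.lam (.app (((Tm.app a b).lift.lift).bind (Tm.up (Tm.s0 t0))) (.app t0.lift (.var 0)))) = _
      rw [show t1.lift.bind (Tm.s0 t0) = t1 from Tm.subst0_lift t1 t0]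
      rw [show ((Tm.app a b).lift.lift).bind (Tm.up (Tm.s0 t0)) = (Tm.app a b).lift from ?_]
      · rfl
      · rw [Tm.lift_bind_up, show (Tm.app a b).lift.bind (Tm.s0 t0) = Tm.app a b from
          Tm.subst0_lift _ t0]

theorem Mred_app_step {α : Ordinal.{0}} (t2 t0 t3 : Tm S.C) :
    Step S α (.app (Mred S t2 t0) t3) (appRed t2 (.app t0 t3)) := by
  cases t2 with
  | lam q =>
      have hb := Step.beta (S := S) α
        (q.bind fun n => match n with | 0 => .app t0.lift (.var 0) | m + 1 => .var (m + 1)) t3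
      rwa [show (q.bind fun n =>
          match n with | 0 => .app t0.lift (.var 0) | m + 1 => .var (m + 1)).subst0 t3
          = q.subst0 (.app t0 t3) from ?_] at hb
      rw [Tm.subst0_def, Tm.bind_bind, Tm.subst0_def]
      refine Tm.bind_congr (fun n => ?_) q
      cases n with
      | zero => show Tm.app (t0.lift.bind (Tm.s0 t3)) t3 = _
                rw [show t0.lift.bind (Tm.s0 t3) = t0 from Tm.subst0_lift t0 t3]; rfl
      | succ m => rfl
  | var k =>
      have hb := Step.beta (S := S) α (.app (Tm.var k).lift (.app t0.lift (.var 0))) t3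
      rwa [show (Tm.app (Tm.var k).lift (.app t0.lift (.var 0))).subst0 t3
          = Tm.app (.var k) (.app t0 t3) from ?_] at hb
      show Tm.app ((Tm.var k).lift.bind (Tm.s0 t3)) (.app (t0.lift.bind (Tm.s0 t3)) t3) = _
      rw [show t0.lift.bind (Tm.s0 t3) = t0 from Tm.subst0_lift t0 t3,
        show (Tm.var k).lift.bind (Tm.s0 t3) = Tm.var k from Tm.subst0_lift _ t3]
  | const c =>
      have hb := Step.beta (S := S) α (.app (Tm.const c).lift (.app t0.lift (.var 0))) t3
      rwa [show (Tm.app (Tm.const c).lift (.app t0.lift (.var 0))).subst0 t3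
          = Tm.app (.const c) (.app t0 t3) from ?_] at hb
      show Tm.app ((Tm.const c).lift.bind (Tm.s0 t3)) (.app (t0.lift.bind (Tm.s0 t3)) t3) = _
      rw [show t0.lift.bind (Tm.s0 t3) = t0 from Tm.subst0_lift t0 t3,
        show (Tm.const c).lift.bind (Tm.s0 t3) = Tm.const c from Tm.subst0_lift _ t3]
  | app a b =>
      have hb := Step.beta (S := S) α (.app (Tm.app a b).lift (.app t0.lift (.var 0))) t3
      rwa [show (Tm.app (Tm.app a b).lift (.app t0.lift (.var 0))).subst0 t3
          = Tm.app (.app a b) (.app t0 t3) from ?_] at hb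
      show Tm.app ((Tm.app a b).lift.bind (Tm.s0 t3)) (.app (t0.lift.bind (Tm.s0 t3)) t3) = _
      rw [show t0.lift.bind (Tm.s0 t3) = t0 from Tm.subst0_lift t0 t3,
        show (Tm.app a b).lift.bind (Tm.s0 t3) = Tm.app a b from Tm.subst0_lift _ t3]

theorem bind_steps {α : Ordinal.{0}} {σ σ' : Nat → Tm S.C}
    (hσ : ∀ (n : Nat) (f : Nat → Nat), Steps S α ((σ n).rename f) ((σ' n).rename f)) :
    ∀ q : Tm S.C, Steps S α (q.bind σ) (q.bind σ') := by
  intro q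
  induction q generalizing σ σ' with
  | var n =>
      have h := hσ n (fun x => x)
      rwa [Tm.rename_id, Tm.rename_id] at h
  | const c => exact .refl _ _
  | app a b iha ihb =>
      exact steps_trans (steps_appL (b.bind σ) (iha hσ)) (steps_appR (a.bind σ') (ihb hσ))
  | lam a ih =>
      rw [Tm.bind_lam', Tm.bind_lam']
      refine steps_lam (ih ?_)
      intro n f
      cases n with
      | zero => exact .refl _ _
      | succ m =>
          have h := hσ m (fun k => f (k + 1))
          show Steps S α (((σ m).lift).rename f) (((σ' m).lift).rename f)
          rw [Tm.lift, Tm.rename_rename, Tm.lift, Tm.rename_rename]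
          exact h

theorem appRed_arg_steps {α : Ordinal.{0}} (t2 : Tm S.C) {u u' : Tm S.C}
    (h : ∀ f : Nat → Nat, Step S α (u.rename f) (u'.rename f)) :
    Steps S α (appRed t2 u) (appRed t2 u') := by
  have hid : Step S α u u' := by
    have := h (fun x => x); rwa [Tm.rename_id, Tm.rename_id] at this
  cases t2 with
  | lam q =>
      show Steps S α (q.bind (Tm.s0 u)) (q.bind (Tm.s0 u'))
      refine bind_steps (fun n f => ?_) q
      cases n with
      | zero => exact steps_one (h f)
      | succ m => exact .refl _ _
  | var k => exact steps_one (Step.appR _ hid)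
  | const c => exact steps_one (Step.appR _ hid)
  | app a b => exact steps_one (Step.appR _ hid)

end FtRed
section Main
variable {B : Type} {D : B → Type}

theorem sim_appRed (S : CanSys B D) : ∀ α : Ordinal.{0}, ∀ (t : Tm S.C) (τ : ETy B),
    Sim S α t τ → ∀ t0 ∈ S.TT τ, Lead S (α + 1) (appRed t t0) S.top := by
  intro α
  induction α using Ordinal.induction with
  | h α IH =>
  intro t τ h t0 ht0
  have hαsucc : α < α + 1 := by
    rw [Ordinal.add_one_eq_succ]; exact Order.lt_succ α
  have hpos : (0 : Ordinal.{0}) < α + 1 := lt_of_le_of_lt (zero_le (a := α)) hαsucc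
  cases h with
  | ofA b => exact .mk (.refl _ _) (.topA ht0 _)
  | ofH =>
      rw [S.TT_o] at ht0
      exact .mk (.refl _ _) (.topH (by simpa using ht0) _)
  | ofKom hL =>
      rename_i t'
      show Lead S (α + 1) (t'.lift.subst0 t0) S.top
      rw [Tm.subst0_lift]
      obtain ⟨hγ, hl⟩ := hL
      exact lead_mono (le_of_lt (hγ.trans hαsucc)) hl
  | ofKeps hL =>
      rw [S.TT_eps] at ht0
      exact absurd ht0 (Set.notMem_empty t0)
  | ofFom hγ hsim =>
      rename_i γ t1 t2
      rw [Ft_subst0]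
      refine .mk (.refl _ _) (.xiTop hpos (sim_mono (le_of_lt (hγ.trans hαsucc)) hsim) ?_)
      intro t3 ht3
      rw [S.TT_eps] at ht3
      exact absurd ht3 (Set.notMem_empty t3)
  | ofF hγ1 hγ2 hs1 hs2 =>
      rename_i γ1 γ2 t1 t2 τ1 τ2
      rw [Ft_subst0]
      have h0α : (0 : Ordinal.{0}) < α := lt_of_le_of_lt (zero_le (a := γ2)) hγ2
      have hγ2α : γ2 + 1 ≤ α := by
        rw [Ordinal.add_one_eq_succ]; exact Order.succ_le_of_lt hγ2
      by_cases he : τ1 = .eps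
      · subst he
        refine .mk (.refl _ _) (.xiTop hpos (sim_mono (le_of_lt (hγ1.trans hαsucc)) hs1) ?_)
        intro t3 ht3
        rw [S.TT_eps] at ht3
        exact absurd ht3 (Set.notMem_empty t3)
      by_cases hw : τ2 = .omega
      · subst hw
        refine .mk (.refl _ _) (.xiTop hpos (sim_mono (le_of_lt (hγ1.trans hαsucc)) hs1) ?_)
        intro t3 ht3
        refine LeadLt.mk hαsucc ?_
        refine steps_lead (steps_one (Mred_app_step t2 t0 t3)) ?_
        have hIH := IH γ2 hγ2 t2 .omega hs2 (.app t0 t3) (by rw [S.TT_omega]; trivial)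
        exact lead_mono hγ2α hIH
      by_cases hε2 : τ2 = .eps
      · subst hε2
        rw [arrN_eps_right he, S.TT_eps] at ht0
        exact absurd ht0 (Set.notMem_empty t0)
      · rw [arrN_std he hw hε2] at ht0
        have hT1 : IsT1 (.arr τ1 τ2) := by
          by_contra hn
          rw [S.TT_invalid _ hn (fun h => nomatch h)] at ht0
          exact absurd ht0 (Set.notMem_empty t0)
        have hT2 : IsT1 τ2 := by
          cases hT1 with
          | arr a b => exact b
          | omegaArr b => exact b
        refine .mk (.refl _ _) (.xiTop hpos (sim_mono (le_of_lt (hγ1.trans hαsucc)) hs1) ?_)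
        intro t3 ht3
        refine LeadLt.mk hαsucc ?_
        have hρ' : S.F τ1 τ2 t0 t3 ∈ S.TT τ2 := S.F_mapsto _ _ hT1 t0 ht0 t3 ht3
        have hstep : ∀ f : Nat → Nat,
            Step S α ((Tm.app t0 t3).rename f) ((S.F τ1 τ2 t0 t3).rename f) := by
          intro f
          rw [closed_rename (closed_T1 hT2 _ hρ') f]
          show Step S α (.app (t0.rename f) (t3.rename f)) (S.F τ1 τ2 t0 t3)
          by_cases hw1 : τ1 = .omega
          · subst hw1
            rw [S.TT_omega_arr _ hT2] at ht0
            obtain ⟨ρ0, hρ0, rfl⟩ := ht0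
            have hc0 := closed_T1 hT2 ρ0 hρ0
            rw [show (Tm.lam ρ0).rename f = Tm.lam ρ0 from
              congrArg Tm.lam (closed_rename hc0 _)]
            have hb := Step.beta (S := S) α ρ0 (t3.rename f)
            rwa [show ρ0.subst0 (t3.rename f) = S.F .omega τ2 (.lam ρ0) t3 from
              (hc0 _).trans (S.F_omega τ2 ρ0 hρ0 t3).symm] at hb
          · have hτ1T1 : IsT1 τ1 := by
              cases hT1 with
              | arr a b => exact a
              | omegaArr b => exact absurd rfl hw1
            rw [closed_rename (closed_T1 hτ1T1 t3 ht3) f,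
              closed_rename (closed_T1 hT1 t0 ht0) f]
            exact Step.crule h0α hw1 ht0 ht3 (Succ.refl hw1 ht3 0)
        refine steps_lead (steps_one (Mred_app_step t2 t0 t3)) ?_
        refine steps_lead (appRed_arg_steps t2 hstep) ?_
        exact lead_mono hγ2α (IH γ2 hγ2 t2 τ2 hs2 _ hρ')

end Main

theorem sim_correct' {B : Type} {D : B → Type}
    (S : CanSys B D) (α : Ordinal.{0}) (t : Tm S.C) (τ : ETy B)
    (h : Sim S α t τ) :
    ∀ t0 ∈ S.TT τ, Lead S (α + 1) (.app t t0) S.top := by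
  intro t0 ht0
  have haux := sim_appRed S α t τ h t0 ht0
  cases t with
  | lam q => exact steps_lead (steps_one (Step.beta _ q t0)) haux
  | var n => exact haux
  | const c => exact haux
  | app a b => exact haux

/-- **Lemma 4.19.**  If `t ∼_α τ` then for all canonical terms `t₀ ∈ T_τ` we have
`t t₀ ⇝_{α+1} ⊤`. -/
theorem sim_correct {B : Type} [Finite B] {D : B → Type} (hD : ∀ b, Nonempty (D b))
    (S : CanSys B D) (α : Ordinal.{0}) (t : Tm S.C) (τ : ETy B)
    (h : Sim S α t τ) :
    ∀ t0 ∈ S.TT τ, Lead S (α + 1) (.app t t0) S.top := by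
  exact fun t0 ht0 => sim_correct' S α t τ h t0 ht0

end ILM
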